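/- arXiv:1407.6237 — 3 statements merged into one kernel-verified Lean document; each statement's English description precedes it below -/
import Mathlib

section
/- Let ω, ε, μd, μ0, σd, σ0 ∈ ℂ with ω ≠ 0, μd ≠ 0, μ0 ≠ 0. Let Ek, Hk, El0, Hl0 : ℝ³ → ℂ³ be fields differentiable at a point x and satisfying at x the time-harmonic Maxwell relations curl Ek = i·ω·μd · Hk, curl Hk = (σd − i·ω·ε) · Ek, curl El0 = i·ω·μ0 · Hl0, curl Hl0 = (σ0 − i·ω·ε) · El0. Then at x one has div(El0 × Hk − Ek × Hl0) = ((μ0 − μd)/(i·ω·μd·μ0)) · (curl Ek · curl El0) + (σ0 − σd) · (Ek · El0). -/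
/-- Partial derivative in direction `i` of a field `ℝ³ → ℂ³`. -/
noncomputable def pdC (i : Fin 3) (F : (Fin 3 → ℝ) → (Fin 3 → ℂ)) (x : Fin 3 → ℝ) :
    Fin 3 → ℂ :=
  fderiv ℝ F x (Pi.single i 1)

/-- Curl of a field `ℝ³ → ℂ³`. -/
noncomputable def curlC (F : (Fin 3 → ℝ) → (Fin 3 → ℂ)) (x : Fin 3 → ℝ) : Fin 3 → ℂ :=
  ![pdC 1 F x 2 - pdC 2 F x 1,
    pdC 2 F x 0 - pdC 0 F x 2,
    pdC 0 F x 1 - pdC 1 F x 0]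

/-- Divergence of a field `ℝ³ → ℂ³`. -/
noncomputable def divC (F : (Fin 3 → ℝ) → (Fin 3 → ℂ)) (x : Fin 3 → ℝ) : ℂ :=
  ∑ i : Fin 3, pdC i F x i

/-- Bilinear dot product on `ℂ³` (no conjugation). -/
noncomputable def dotC (u v : Fin 3 → ℂ) : ℂ := ∑ i : Fin 3, u i * v i

/-- Cross product on `ℂ³`. -/
noncomputable def crossC (u v : Fin 3 → ℂ) : Fin 3 → ℂ :=
  ![u 1 * v 2 - u 2 * v 1, u 2 * v 0 - u 0 * v 2, u 0 * v 1 - u 1 * v 0]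


private lemma pdC_comp (i j : Fin 3) (F : (Fin 3 → ℝ) → (Fin 3 → ℂ)) (x : Fin 3 → ℝ)
    (hF : DifferentiableAt ℝ F x) :
    pdC i F x j = fderiv ℝ (fun y => F y j) x (Pi.single i 1) := by
  rw [pdC, fderiv_pi (differentiableAt_pi.mp hF)]
  rfl

private lemma pd_mul (i : Fin 3) (f g : (Fin 3 → ℝ) → ℂ) (x : Fin 3 → ℝ)
    (hf : DifferentiableAt ℝ f x) (hg : DifferentiableAt ℝ g x) :
    fderiv ℝ (fun y => f y * g y) x (Pi.single i 1) =
      fderiv ℝ f x (Pi.single i 1) * g x + f x * fderiv ℝ g x (Pi.single i 1) := by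
  rw [fderiv_fun_mul hf hg]
  simp [mul_comm]
  ring

private lemma diff_cross {A B : (Fin 3 → ℝ) → (Fin 3 → ℂ)} {x : Fin 3 → ℝ}
    (hA : DifferentiableAt ℝ A x) (hB : DifferentiableAt ℝ B x) :
    DifferentiableAt ℝ (fun y => crossC (A y) (B y)) x := by
  have a := differentiableAt_pi.mp hA
  have b := differentiableAt_pi.mp hB
  rw [differentiableAt_pi]
  intro i
  fin_cases i <;> simp only [crossC, Matrix.cons_val_zero, Matrix.cons_val_one,
    Matrix.head_cons, Matrix.cons_val_two, Matrix.tail_cons, Fin.isValue] <;>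
    exact ((a _).mul (b _)).sub ((a _).mul (b _))

private lemma divC_cross (A B : (Fin 3 → ℝ) → (Fin 3 → ℂ)) (x : Fin 3 → ℝ)
    (hA : DifferentiableAt ℝ A x) (hB : DifferentiableAt ℝ B x) :
    divC (fun y => crossC (A y) (B y)) x =
      dotC (B x) (curlC A x) - dotC (A x) (curlC B x) := by
  have a := differentiableAt_pi.mp hA
  have b := differentiableAt_pi.mp hB
  have hAB := diff_cross hA hB
  have key : ∀ i j k l m : Fin 3,
      (∀ y, crossC (A y) (B y) i = A y j * B y k - A y l * B y m) →
      pdC i (fun y => crossC (A y) (B y)) x i =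
        (fderiv ℝ (fun y => A y j) x (Pi.single i 1) * B x k
          + A x j * fderiv ℝ (fun y => B y k) x (Pi.single i 1))
        - (fderiv ℝ (fun y => A y l) x (Pi.single i 1) * B x m
          + A x l * fderiv ℝ (fun y => B y m) x (Pi.single i 1)) := by
    intro i j k l m h
    rw [pdC_comp i i _ x hAB]
    have : (fun y => crossC (A y) (B y) i)
        = fun y => A y j * B y k - A y l * B y m := funext h
    rw [this, fderiv_fun_sub (f := fun y => A y j * B y k) (g := fun y => A y l * B y m) ((a j).mul (b k)) ((a l).mul (b m))]
    simp only [ContinuousLinearMap.sub_apply]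
    rw [pd_mul i _ _ x (a j) (b k), pd_mul i _ _ x (a l) (b m)]
  have h0 := key 0 1 2 2 1 (fun y => by simp [crossC])
  have h1 := key 1 2 0 0 2 (fun y => by simp [crossC])
  have h2 := key 2 0 1 1 0 (fun y => by simp [crossC])
  simp only [divC, Fin.sum_univ_three, h0, h1, h2, dotC, curlC,
    Matrix.cons_val_zero, Matrix.cons_val_one, Matrix.head_cons,
    Matrix.cons_val_two, Matrix.tail_cons, Fin.isValue]
  rw [pdC_comp 1 2 A x hA, pdC_comp 2 1 A x hA, pdC_comp 2 0 A x hA,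
    pdC_comp 0 2 A x hA, pdC_comp 0 1 A x hA, pdC_comp 1 0 A x hA,
    pdC_comp 1 2 B x hB, pdC_comp 2 1 B x hB, pdC_comp 2 0 B x hB,
    pdC_comp 0 2 B x hB, pdC_comp 0 1 B x hB, pdC_comp 1 0 B x hB]
  ring

private lemma divC_sub (F G : (Fin 3 → ℝ) → (Fin 3 → ℂ)) (x : Fin 3 → ℝ)
    (hF : DifferentiableAt ℝ F x) (hG : DifferentiableAt ℝ G x) :
    divC (fun y => F y - G y) x = divC F x - divC G x := by
  simp only [divC, pdC, fderiv_fun_sub hF hG, ContinuousLinearMap.sub_apply,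
    Pi.sub_apply, Finset.sum_sub_distrib]

/-- The pointwise divergence identity behind the impedance measurement formula
`ΔZ_{kl}`: for time-harmonic Maxwell fields,
`div(El0 × Hk − Ek × Hl0) = ((μ0 − μd)/(iωμdμ0))·(curl Ek · curl El0)
  + (σ0 − σd)·(Ek · El0)` at `x`. -/
theorem divergence_identity_impedance
    (ω ε μd μ0 σd σ0 : ℂ) (hω : ω ≠ 0) (hμd : μd ≠ 0) (hμ0 : μ0 ≠ 0)
    (Ek Hk El0 Hl0 : (Fin 3 → ℝ) → (Fin 3 → ℂ)) (x : Fin 3 → ℝ)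
    (hEk : DifferentiableAt ℝ Ek x) (hHk : DifferentiableAt ℝ Hk x)
    (hEl0 : DifferentiableAt ℝ El0 x) (hHl0 : DifferentiableAt ℝ Hl0 x)
    (hMF_k : ∀ i, curlC Ek x i = Complex.I * ω * μd * Hk x i)
    (hMA_k : ∀ i, curlC Hk x i = (σd - Complex.I * ω * ε) * Ek x i)
    (hMF_l : ∀ i, curlC El0 x i = Complex.I * ω * μ0 * Hl0 x i)
    (hMA_l : ∀ i, curlC Hl0 x i = (σ0 - Complex.I * ω * ε) * El0 x i) :
    divC (fun y => crossC (El0 y) (Hk y) - crossC (Ek y) (Hl0 y)) x =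
      ((μ0 - μd) / (Complex.I * ω * μd * μ0)) * dotC (curlC Ek x) (curlC El0 x)
        + (σ0 - σd) * dotC (Ek x) (El0 x) := by
  rw [divC_sub _ _ x (diff_cross hEl0 hHk) (diff_cross hEk hHl0),
    divC_cross _ _ x hEl0 hHk, divC_cross _ _ x hEk hHl0]
  have hI : Complex.I ≠ 0 := Complex.I_ne_zero
  simp only [dotC, Fin.sum_univ_three, hMF_k, hMA_k, hMF_l, hMA_l]
  field_simp
  ring
end

section
/- Let A be a 3×3 real matrix and ν ∈ ℝ³ with ‖ν‖ = 1. Then the function s ↦ det(1 + s·A) · ‖((1 + s·A)⁻¹)ᵀ · ν‖ (defined for s in a neighborhood of 0, where 1 + s·A is invertible) has derivative trace(A) − ⟨A·ν, ν⟩ at s = 0. In particular, for A = Dθ(x) this derivative is the tangential divergence div_τ θ = div θ − ⟨Dθ(x)·ν, ν⟩ of θ at a surface point with unit normal ν; i.e. the derivative of the surface Jacobian w_s = j_s·‖DT_s⁻ᵀ ν‖ at s = 0 equals div_τ θ. -/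
open Matrix

attribute [local instance] Matrix.linftyOpNormedRing Matrix.linftyOpNormedAlgebra

/-- Euclidean norm on `ℝ³` (as `Fin 3 → ℝ`). -/
noncomputable def enorm3 (v : Fin 3 → ℝ) : ℝ := Real.sqrt (∑ i : Fin 3, v i ^ 2)

/-- The derivative at `s = 0` of the surface Jacobian
`w_s = det(1 + s·A) · ‖((1 + s·A)⁻¹)ᵀ ν‖` (for a unit vector `ν`) is the
tangential divergence `trace A − ⟨A ν, ν⟩`. -/
theorem deriv_surface_jacobian (A : Matrix (Fin 3) (Fin 3) ℝ) (ν : Fin 3 → ℝ)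
    (hν : enorm3 ν = 1) :
    HasDerivAt
      (fun s : ℝ => (1 + s • A).det * enorm3 ((((1 + s • A)⁻¹)ᵀ) *ᵥ ν))
      (A.trace - (A *ᵥ ν) ⬝ᵥ ν) 0 := by
  have hF : HasDerivAt (fun s : ℝ => 1 + s • A) A 0 := by
    have h := ((hasDerivAt_id (0:ℝ)).smul_const A).const_add 1
    simp only [one_smul, id] at h
    exact h
  have hinv : HasDerivAt (fun s : ℝ => Ring.inverse (1 + s • A)) (-A) 0 := by
    have h1 := hasFDerivAt_ringInverse (R := Matrix (Fin 3) (Fin 3) ℝ) (𝕜 := ℝ) 1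
    rw [show ((1 : (Matrix (Fin 3) (Fin 3) ℝ)ˣ) : Matrix (Fin 3) (Fin 3) ℝ)
        = 1 + (0:ℝ) • A by simp] at h1
    have h2 := h1.comp_hasDerivAt (x := (0:ℝ)) hF
    simp at h2
    exact h2
  have hentry : ∀ i j, HasDerivAt (fun s : ℝ => Ring.inverse (1 + s • A) i j) (-A i j) 0 := by
    intro i j
    let E : Matrix (Fin 3) (Fin 3) ℝ →ₗ[ℝ] ℝ :=
      { toFun := fun M => M i j
        map_add' := fun M N => rfl
        map_smul' := fun c M => rfl }
    have h3 := (E.toContinuousLinearMap.hasFDerivAt).comp_hasDerivAt (x := (0:ℝ)) hinv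
    exact h3
  have hv : ∀ i, HasDerivAt (fun s : ℝ => ∑ j : Fin 3, Ring.inverse (1 + s • A) j i * ν j)
      (∑ j : Fin 3, -A j i * ν j) 0 :=
    fun i => HasDerivAt.fun_sum fun j _ => (hentry j i).mul_const (ν j)
  have hval : ∀ i, (∑ j : Fin 3, Ring.inverse (1 + (0:ℝ) • A) j i * ν j) = ν i := by
    intro i
    simp [Matrix.one_apply, Finset.sum_ite_eq, Finset.mem_univ]
  set q : ℝ → ℝ := fun s => ∑ i : Fin 3, (∑ j : Fin 3, Ring.inverse (1 + s • A) j i * ν j) ^ 2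
    with hqdef
  have hq0 : q 0 = 1 := by
    have h1 : (∑ i : Fin 3, ν i ^ 2) = 1 := by
      have := hν
      rw [enorm3] at this
      nlinarith [Real.sq_sqrt (by positivity : (0:ℝ) ≤ ∑ i : Fin 3, ν i ^ 2)]
    simp only [hqdef]
    rw [← h1]
    exact Finset.sum_congr rfl fun i _ => by rw [hval i]
  have hq : HasDerivAt q (∑ i : Fin 3, 2 * ν i * (∑ j : Fin 3, -A j i * ν j)) 0 := by
    apply HasDerivAt.fun_sum
    intro i _
    have h := (hv i).fun_pow 2
    rw [hval i] at h
    refine h.congr_deriv ?_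
    ring
  have hsqrt : HasDerivAt (fun s => Real.sqrt (q s))
      ((∑ i : Fin 3, 2 * ν i * (∑ j : Fin 3, -A j i * ν j)) / (2 * Real.sqrt (q 0))) 0 :=
    hq.sqrt (by rw [hq0]; norm_num)
  have hent : ∀ i j, HasDerivAt (fun s : ℝ => (1 + s • A) i j) (A i j) 0 := by
    intro i j
    have h : (fun s : ℝ => (1 + s • A) i j)
        = fun s => (1 : Matrix (Fin 3) (Fin 3) ℝ) i j + s * A i j := by
      funext s; simp [Matrix.add_apply, Matrix.smul_apply, smul_eq_mul]
    rw [h]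
    exact (hasDerivAt_mul_const (A i j)).const_add ((1 : Matrix (Fin 3) (Fin 3) ℝ) i j)
  have hdet : HasDerivAt (fun s : ℝ => (1 + s • A).det) A.trace 0 := by
    have hre : (fun s : ℝ => (1 + s • A).det) = fun s =>
        (1+s•A) 0 0 * (1+s•A) 1 1 * (1+s•A) 2 2 - (1+s•A) 0 0 * (1+s•A) 1 2 * (1+s•A) 2 1
        - (1+s•A) 0 1 * (1+s•A) 1 0 * (1+s•A) 2 2 + (1+s•A) 0 1 * (1+s•A) 1 2 * (1+s•A) 2 0
        + (1+s•A) 0 2 * (1+s•A) 1 0 * (1+s•A) 2 1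
        - (1+s•A) 0 2 * (1+s•A) 1 1 * (1+s•A) 2 0 := by
      funext s; rw [Matrix.det_fin_three]
    rw [hre]
    have H := (((((((hent 0 0).mul (hent 1 1)).mul (hent 2 2)).sub
        (((hent 0 0).mul (hent 1 2)).mul (hent 2 1))).sub
        (((hent 0 1).mul (hent 1 0)).mul (hent 2 2))).add
        (((hent 0 1).mul (hent 1 2)).mul (hent 2 0))).add
        (((hent 0 2).mul (hent 1 0)).mul (hent 2 1))).sub
        (((hent 0 2).mul (hent 1 1)).mul (hent 2 0))
    refine H.congr_deriv ?_
    simp [Matrix.trace_fin_three, Matrix.one_apply, Matrix.add_apply, Matrix.smul_apply]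
  have hfun : (fun s : ℝ => (1 + s • A).det * enorm3 ((((1 + s • A)⁻¹)ᵀ) *ᵥ ν))
      = fun s => (1 + s • A).det * Real.sqrt (q s) := by
    funext s
    congr 1
    rw [enorm3, hqdef]
    congr 1
    apply Finset.sum_congr rfl
    intro i _
    congr 1
    rw [Matrix.nonsing_inv_eq_ringInverse]
    simp [Matrix.mulVec, dotProduct, Matrix.transpose_apply]
  rw [hfun]
  have hmul := hdet.mul hsqrt
  refine hmul.congr_deriv ?_
  rw [hq0]
  simp only [zero_smul, add_zero, Matrix.det_one, Real.sqrt_one]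
  have key : (∑ i : Fin 3, 2 * ν i * ∑ j : Fin 3, -A j i * ν j)
      = -2 * ((A *ᵥ ν) ⬝ᵥ ν) := by
    have h1 : (∑ i : Fin 3, 2 * ν i * ∑ j : Fin 3, -A j i * ν j)
        = ∑ i : Fin 3, ∑ j : Fin 3, -(2 * (A j i * ν j * ν i)) := by
      apply Finset.sum_congr rfl
      intro i _
      rw [Finset.mul_sum]
      apply Finset.sum_congr rfl
      intro j _
      ring
    rw [h1, Finset.sum_comm]
    rw [show ((A *ᵥ ν) ⬝ᵥ ν) = ∑ j : Fin 3, (∑ i : Fin 3, A j i * ν i) * ν j by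
      simp [dotProduct, Matrix.mulVec]]
    rw [Finset.mul_sum]
    apply Finset.sum_congr rfl
    intro j _
    rw [Finset.sum_mul, Finset.mul_sum]
    apply Finset.sum_congr rfl
    intro i _
    ring
  rw [key]
  ring
end

section
/- Let A be a 3×3 real matrix. Then the matrix-valued function s ↦ (det(1 + s·A))⁻¹ · ((1 + s·A)ᵀ · (1 + s·A)) (defined for s in a neighborhood of 0) has derivative A + Aᵀ − trace(A)·1 at s = 0, where the derivative is taken entrywise. In particular, for A = Dθ(x), the derivative at s = 0 of DT_sᵀDT_s / j_s for T_s = id + s·θ equals −div(θ)·1 + Dθ + Dθᵀ. -/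
open Matrix Polynomial

lemma hasDerivAt_det_one_add_smul (A : Matrix (Fin 3) (Fin 3) ℝ) :
    HasDerivAt (fun s : ℝ => (1 + s • A).det) A.trace 0 := by
  have key : ∀ s : ℝ, (1 + s • A).det =
      1 + A.trace * s + ((1 + (X : ℝ[X]) • A.map C).det).divX.divX.eval s * s ^ 2 := by
    intro s; exact Matrix.det_one_add_smul s A
  have h1 : HasDerivAt (fun s : ℝ =>
      1 + A.trace * s + ((1 + (X : ℝ[X]) • A.map C).det).divX.divX.eval s * s ^ 2)
      A.trace 0 := by
    have hp := ((1 + (X : ℝ[X]) • A.map C).det).divX.divX.hasDerivAt (0 : ℝ)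
    have hsq : HasDerivAt (fun s : ℝ => s ^ 2) (0 : ℝ) 0 := by
      simpa using hasDerivAt_pow 2 (0 : ℝ)
    have := ((hasDerivAt_const (0:ℝ) (1:ℝ)).add
      ((hasDerivAt_id (0:ℝ)).const_mul A.trace)).add (hp.mul hsq)
    exact this.congr_deriv (by simp)
  exact h1.congr_of_eventuallyEq (Filter.Eventually.of_forall key)

/-- Entrywise derivative at `s = 0` of
`s ↦ (det(1 + s·A))⁻¹ · ((1 + s·A)ᵀ (1 + s·A))` is `A + Aᵀ − (trace A)·1`;
this is the derivative of `DT_sᵀ DT_s / j_s` for `T_s = id + s·θ`, `A = Dθ(x)`. -/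
theorem deriv_metric_jacobian (A : Matrix (Fin 3) (Fin 3) ℝ) :
    ∀ i j : Fin 3,
      HasDerivAt
        (fun s : ℝ => ((1 + s • A).det)⁻¹ *
          (((1 + s • A)ᵀ * (1 + s • A) : Matrix (Fin 3) (Fin 3) ℝ) i j))
        ((A + Aᵀ - A.trace • (1 : Matrix (Fin 3) (Fin 3) ℝ)) i j) 0 := by
  intro i j
  have hdet := hasDerivAt_det_one_add_smul A
  have hdet0 : (1 + (0:ℝ) • A).det = 1 := by simp
  have hinv : HasDerivAt (fun s : ℝ => ((1 + s • A).det)⁻¹) (-A.trace) 0 := by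
    have := hdet.inv (by rw [hdet0]; norm_num)
    exact this.congr_deriv (by simp [hdet0])
  -- entry function explicit form
  have hentry : ∀ s : ℝ, ((1 + s • A)ᵀ * (1 + s • A) : Matrix (Fin 3) (Fin 3) ℝ) i j =
      (1 : Matrix (Fin 3) (Fin 3) ℝ) i j + s * (A i j + A j i)
        + s ^ 2 * (∑ k, A k i * A k j) := by
    intro s
    simp [Matrix.mul_apply, Matrix.add_apply, Matrix.transpose_apply, Matrix.one_apply,
      Fin.sum_univ_three]
    fin_cases i <;> fin_cases j <;> simp <;> ring
  have hg : HasDerivAt (fun s : ℝ =>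
      ((1 + s • A)ᵀ * (1 + s • A) : Matrix (Fin 3) (Fin 3) ℝ) i j)
      (A i j + A j i) 0 := by
    have h2 : HasDerivAt (fun s : ℝ =>
        (1 : Matrix (Fin 3) (Fin 3) ℝ) i j + s * (A i j + A j i)
          + s ^ 2 * (∑ k, A k i * A k j)) (A i j + A j i) 0 := by
      have hsq : HasDerivAt (fun s : ℝ => s ^ 2) (0 : ℝ) 0 := by
        simpa using hasDerivAt_pow 2 (0 : ℝ)
      have := ((hasDerivAt_const (0:ℝ) ((1 : Matrix (Fin 3) (Fin 3) ℝ) i j)).add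
        ((hasDerivAt_id (0:ℝ)).mul_const (A i j + A j i))).add
        (hsq.mul_const (∑ k, A k i * A k j))
      exact this.congr_deriv (by simp)
    exact h2.congr_of_eventuallyEq (Filter.Eventually.of_forall hentry)
  have := hinv.mul hg
  have hg0 : ((1 + (0:ℝ) • A)ᵀ * (1 + (0:ℝ) • A) : Matrix (Fin 3) (Fin 3) ℝ) i j
      = (1 : Matrix (Fin 3) (Fin 3) ℝ) i j := by simp
  simp only [hdet0, hg0, inv_one, one_mul] at this
  refine this.congr_deriv ?_
  simp [Matrix.sub_apply, Matrix.add_apply, Matrix.transpose_apply, Matrix.smul_apply,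
    Matrix.one_apply, smul_eq_mul]
  split <;> ring
end
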